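/- Let A ⊂ ℝ^d be a finite nonempty set, G a d×d positive definite real matrix, θ, θ̂ ∈ ℝ^d, and β ≥ 0 such that ‖θ̂ − θ‖_G ≤ sqrt(β). Let x* ∈ A maximize x ↦ ⟨x, θ⟩ over A, and let X ∈ A maximize the upper confidence index x ↦ ⟨x, θ̂⟩ + sqrt(β) · ‖x‖_{G⁻¹} over A. Then ⟨x* − X, θ⟩ ≤ 2 sqrt(β) · ‖X‖_{G⁻¹}. -/

import Mathlib

open Matrix

private lemma dp_self_nonneg {d : ℕ} (u : Fin d → ℝ) : 0 ≤ u ⬝ᵥ u :=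
  Finset.sum_nonneg fun i _ => mul_self_nonneg _

private lemma dp_helper {d : ℕ} (M N : Matrix (Fin d) (Fin d) ℝ) (hM : Mᵀ = M)
    (a b : Fin d → ℝ) : (M *ᵥ a) ⬝ᵥ (N *ᵥ b) = a ⬝ᵥ (M * N) *ᵥ b := by
  have h1 : M *ᵥ a = a ᵥ* M := by
    conv_lhs => rw [← hM]
    rw [Matrix.mulVec_transpose]
  rw [h1, ← Matrix.dotProduct_mulVec, Matrix.mulVec_mulVec]

private lemma cs_matrix {d : ℕ} (G : Matrix (Fin d) (Fin d) ℝ) (hG : G.PosDef)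
    (x y : Fin d → ℝ) :
    x ⬝ᵥ y ≤ Real.sqrt (x ⬝ᵥ G⁻¹.mulVec x) * Real.sqrt (y ⬝ᵥ G.mulVec y) := by
  obtain ⟨S, hSsd, hSsq⟩ : ∃ S : Matrix (Fin d) (Fin d) ℝ, S.PosSemidef ∧ S * S = G :=
    open scoped MatrixOrder in
    ⟨CFC.sqrt G, (CFC.sqrt_nonneg G).posSemidef, CFC.sqrt_mul_sqrt_self G hG.posSemidef.nonneg⟩
  have hSdet : IsUnit S.det := by
    have h : S.det * S.det = G.det := by rw [← det_mul, hSsq]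
    have : G.det ≠ 0 := ne_of_gt hG.det_pos
    refine isUnit_iff_ne_zero.mpr fun h0 => this ?_
    rw [← h, h0, mul_zero]
  have hSinv : S⁻¹ * S⁻¹ = G⁻¹ := by rw [← Matrix.mul_inv_rev, hSsq]
  have hSsymm : Sᵀ = S := hSsd.1
  have hSinvsymm : (S⁻¹)ᵀ = S⁻¹ := by rw [Matrix.transpose_nonsing_inv, hSsymm]
  set u := S⁻¹.mulVec x with hu
  set v := S.mulVec y with hv
  have hxy : x ⬝ᵥ y = u ⬝ᵥ v := by
    rw [hu, hv, dp_helper _ _ hSinvsymm, Matrix.nonsing_inv_mul _ hSdet, Matrix.one_mulVec]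
  have huu : u ⬝ᵥ u = x ⬝ᵥ G⁻¹.mulVec x := by
    rw [hu, dp_helper _ _ hSinvsymm, hSinv]
  have hvv : v ⬝ᵥ v = y ⬝ᵥ G.mulVec y := by
    rw [hv, dp_helper _ _ hSsymm, hSsq]
  have hcs : (u ⬝ᵥ v) ^ 2 ≤ (u ⬝ᵥ u) * (v ⬝ᵥ v) := by
    have := Finset.sum_mul_sq_le_sq_mul_sq Finset.univ u v
    simpa [dotProduct, sq, Finset.sum_mul_sum] using this
  calc x ⬝ᵥ y = u ⬝ᵥ v := hxy
    _ ≤ Real.sqrt ((u ⬝ᵥ v) ^ 2) := by rw [Real.sqrt_sq_eq_abs]; exact le_abs_self _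
    _ ≤ Real.sqrt ((u ⬝ᵥ u) * (v ⬝ᵥ v)) := Real.sqrt_le_sqrt hcs
    _ = Real.sqrt (u ⬝ᵥ u) * Real.sqrt (v ⬝ᵥ v) := Real.sqrt_mul (dp_self_nonneg u) _
    _ = _ := by rw [huu, hvv]

theorem stmt7 {d : ℕ} (A : Finset (Fin d → ℝ)) (hA : A.Nonempty)
    (G : Matrix (Fin d) (Fin d) ℝ) (hG : G.PosDef)
    (θ θhat : Fin d → ℝ) (β : ℝ) (hβ : 0 ≤ β)
    (hconf : Real.sqrt ((θhat - θ) ⬝ᵥ G.mulVec (θhat - θ)) ≤ Real.sqrt β)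
    (xstar X : Fin d → ℝ) (hxs : xstar ∈ A) (hX : X ∈ A)
    (hopt : ∀ x ∈ A, x ⬝ᵥ θ ≤ xstar ⬝ᵥ θ)
    (hucb : ∀ x ∈ A, x ⬝ᵥ θhat + Real.sqrt β * Real.sqrt (x ⬝ᵥ G⁻¹.mulVec x) ≤
      X ⬝ᵥ θhat + Real.sqrt β * Real.sqrt (X ⬝ᵥ G⁻¹.mulVec X)) :
    (xstar - X) ⬝ᵥ θ ≤ 2 * Real.sqrt β * Real.sqrt (X ⬝ᵥ G⁻¹.mulVec X) := by
  set b := Real.sqrt β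
  set r := Real.sqrt (X ⬝ᵥ G⁻¹.mulVec X)
  set s := Real.sqrt (xstar ⬝ᵥ G⁻¹.mulVec xstar)
  have hbound : ∀ z : Fin d → ℝ,
      z ⬝ᵥ (θ - θhat) ≤ Real.sqrt (z ⬝ᵥ G⁻¹.mulVec z) * b := by
    intro z
    have h1 := cs_matrix G hG z (θ - θhat)
    have h2 : (θ - θhat) ⬝ᵥ G.mulVec (θ - θhat) = (θhat - θ) ⬝ᵥ G.mulVec (θhat - θ) := by
      rw [show θ - θhat = -(θhat - θ) from (neg_sub θhat θ).symm,
        Matrix.mulVec_neg, neg_dotProduct, dotProduct_neg, neg_neg]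
    rw [h2] at h1
    exact h1.trans (mul_le_mul_of_nonneg_left hconf (Real.sqrt_nonneg _))
  have hbound' : ∀ z : Fin d → ℝ,
      z ⬝ᵥ (θhat - θ) ≤ Real.sqrt (z ⬝ᵥ G⁻¹.mulVec z) * b := by
    intro z
    exact (cs_matrix G hG z (θhat - θ)).trans
      (mul_le_mul_of_nonneg_left hconf (Real.sqrt_nonneg _))
  have hucb' := hucb xstar hxs
  have key1 : xstar ⬝ᵥ θ ≤ xstar ⬝ᵥ θhat + s * b := by
    have := hbound xstar
    have hsplit : xstar ⬝ᵥ θ = xstar ⬝ᵥ θhat + xstar ⬝ᵥ (θ - θhat) := by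
      rw [← dotProduct_add]; congr 1; abel
    rw [hsplit]; linarith
  have key2 : X ⬝ᵥ θhat ≤ X ⬝ᵥ θ + r * b := by
    have := hbound' X
    have hsplit : X ⬝ᵥ θhat = X ⬝ᵥ θ + X ⬝ᵥ (θhat - θ) := by
      rw [← dotProduct_add]; congr 1; abel
    rw [hsplit]; linarith
  rw [sub_dotProduct]
  nlinarith [Real.sqrt_nonneg β, Real.sqrt_nonneg (X ⬝ᵥ G⁻¹.mulVec X)]
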